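/- Let Λ ⊆ ℝ^n be a lattice (full-rank discrete subgroup) and Φ an injective linear endomorphism of ℝ^n with Φ(Λ) ⊆ Λ. If Φ has an eigenvalue λ (over ℂ) with |λ| < 1, then there exists α ∈ Λ that is not the value of any word over any finite digit set D ⊆ Λ; in particular D is not a w-NADS. -/

import Mathlib

open Matrix Polynomial

/-- Evaluation of the characteristic polynomial. -/
lemma charpoly_eval_eq_det {n : ℕ} (M : Matrix (Fin n) (Fin n) ℂ) (μ : ℂ) :
    Polynomial.eval μ M.charpoly = (μ • (1 : Matrix (Fin n) (Fin n) ℂ) - M).det := by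
  rw [Matrix.charpoly, ← Polynomial.coe_evalRingHom, RingHom.map_det]
  congr 1
  ext i j
  by_cases h : i = j <;>
    simp [Matrix.charmatrix_apply, h, Matrix.one_apply, Matrix.diagonal_apply]

/-- The auxiliary linear functional attached to a basis and a complex vector. -/
noncomputable def auxF {E : Type*} [AddCommGroup E] [Module ℝ E] {n : ℕ}
    (b : Module.Basis (Fin n) ℝ E) (v : Fin n → ℂ) : E →ₗ[ℝ] ℂ where
  toFun x := ∑ i, (b.repr x i : ℂ) * v i
  map_add' x y := by simp [add_mul, Finset.sum_add_distrib]
  map_smul' c x := by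
    simp [Finset.mul_sum, mul_assoc, Complex.real_smul]

lemma auxF_apply {E : Type*} [AddCommGroup E] [Module ℝ E] {n : ℕ}
    (b : Module.Basis (Fin n) ℝ E) (v : Fin n → ℂ) (x : E) :
    auxF b v x = ∑ i, (b.repr x i : ℂ) * v i := rfl

lemma auxF_basis {E : Type*} [AddCommGroup E] [Module ℝ E] {n : ℕ}
    (b : Module.Basis (Fin n) ℝ E) (v : Fin n → ℂ) (i : Fin n) :
    auxF b v (b i) = v i := by
  simp [auxF_apply, Module.Basis.repr_self, Finsupp.single_apply, apply_ite (Complex.ofReal),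
    ite_mul]

/-- If an injective endomorphism of `ℝ^n` preserving a full-rank lattice `Λ`
has a complex eigenvalue of absolute value `< 1`, then some lattice element is
not the value of any word over any finite digit set `D ⊆ Λ`. -/
theorem no_representation_of_contracting_eigenvalue
    {E : Type*} [NormedAddCommGroup E] [NormedSpace ℝ E] [FiniteDimensional ℝ E]
    {n : ℕ} (b : Module.Basis (Fin n) ℝ E)
    (Λ : Set E) (hΛ : Λ = ↑(Submodule.span ℤ (Set.range ⇑b)))
    (Φ : E →ₗ[ℝ] E) (hΦinj : Function.Injective Φ)
    (hΦΛ : ∀ x ∈ Λ, Φ x ∈ Λ)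
    (hlam : ∃ lam : ℂ, ‖lam‖ < 1 ∧
      (Polynomial.map (algebraMap ℝ ℂ) (LinearMap.charpoly Φ)).IsRoot lam) :
    ∀ D : Finset E, ↑D ⊆ Λ →
      ∃ α ∈ Λ, ∀ (ℓ : ℕ) (η : Fin ℓ → E), (∀ j, η j ∈ D) →
        (∑ j : Fin ℓ, (Φ ^ (j : ℕ)) (η j)) ≠ α := by
  obtain ⟨μ, hμ1, hμroot⟩ := hlam
  intro D hD
  -- the matrix of Φ and its complexification
  set A : Matrix (Fin n) (Fin n) ℝ := LinearMap.toMatrix b b Φ with hA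
  set Ac : Matrix (Fin n) (Fin n) ℂ := A.map (algebraMap ℝ ℂ) with hAc
  have hcp : Ac.charpoly = (LinearMap.charpoly Φ).map (algebraMap ℝ ℂ) := by
    rw [hAc, Matrix.charpoly_map, LinearMap.charpoly_toMatrix]
  have hdet : (μ • (1 : Matrix (Fin n) (Fin n) ℂ) - Ac).det = 0 := by
    rw [← charpoly_eval_eq_det, hcp]
    exact hμroot
  obtain ⟨v, hv0, hvA⟩ := (Matrix.exists_vecMul_eq_zero_iff).2 hdet
  have hvA' : v ᵥ* Ac = μ • v := by
    have := hvA
    rw [Matrix.vecMul_sub, sub_eq_zero] at this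
    rw [← this]
    ext j
    simp [Matrix.vecMul, dotProduct, Matrix.one_apply, mul_ite, Finset.sum_ite_eq,
      mul_comm]
  -- the linear functional
  set f : E →ₗ[ℝ] ℂ := auxF b v with hf
  have hfΦ : ∀ x : E, f (Φ x) = μ * f x := by
    intro x
    have hrepr : ∀ i, b.repr (Φ x) i = (A *ᵥ (b.repr x)) i := by
      intro i
      rw [LinearMap.toMatrix_mulVec_repr]
    calc f (Φ x) = ∑ i, ((A *ᵥ (b.repr x)) i : ℂ) * v i := by
          simp only [hf, auxF_apply, hrepr]
      _ = ∑ i, ∑ j, ((A i j : ℂ) * (b.repr x j : ℂ)) * v i := by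
          refine Finset.sum_congr rfl fun i _ => ?_
          rw [Matrix.mulVec, dotProduct, Complex.ofReal_sum, Finset.sum_mul]
          refine Finset.sum_congr rfl fun j _ => ?_
          push_cast; ring
      _ = ∑ j, (b.repr x j : ℂ) * (∑ i, v i * (A i j : ℂ)) := by
          rw [Finset.sum_comm]
          refine Finset.sum_congr rfl fun j _ => ?_
          rw [Finset.mul_sum]
          refine Finset.sum_congr rfl fun i _ => ?_
          ring
      _ = ∑ j, (b.repr x j : ℂ) * (μ * v j) := by
          refine Finset.sum_congr rfl fun j _ => ?_
          have : (v ᵥ* Ac) j = μ * v j := by rw [hvA']; simp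
          rw [← this, Matrix.vecMul, dotProduct]
          simp [hAc]
      _ = μ * f x := by
          simp only [hf, auxF_apply, Finset.mul_sum]
          refine Finset.sum_congr rfl fun j _ => ?_
          ring
  have hfΦk : ∀ (k : ℕ) (x : E), f ((Φ ^ k) x) = μ ^ k * f x := by
    intro k
    induction k with
    | zero => intro x; simp
    | succ m ih =>
      intro x
      rw [pow_succ', Module.End.mul_apply, hfΦ, ih, pow_succ']
      ring
  -- the bound
  set r : ℝ := ‖μ‖ with hr
  have hr0 : 0 ≤ r := norm_nonneg μ
  set M : ℝ := ∑ d ∈ D, ‖f d‖ with hM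
  have hM0 : 0 ≤ M := Finset.sum_nonneg fun d _ => norm_nonneg _
  have hfd : ∀ d ∈ D, ‖f d‖ ≤ M := by
    intro d hd
    exact Finset.single_le_sum (fun e _ => norm_nonneg (f e)) hd
  set B : ℝ := M * (1 - r)⁻¹ with hB
  have hbound : ∀ (ℓ : ℕ) (η : Fin ℓ → E), (∀ j, η j ∈ D) →
      ‖f (∑ j : Fin ℓ, (Φ ^ (j : ℕ)) (η j))‖ ≤ B := by
    intro ℓ η hη
    rw [map_sum]
    calc ‖∑ j : Fin ℓ, f ((Φ ^ (j : ℕ)) (η j))‖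
        ≤ ∑ j : Fin ℓ, ‖f ((Φ ^ (j : ℕ)) (η j))‖ :=
          norm_sum_le _ _
      _ ≤ ∑ j : Fin ℓ, r ^ (j : ℕ) * M := by
          refine Finset.sum_le_sum fun j _ => ?_
          rw [hfΦk, norm_mul, norm_pow]
          exact mul_le_mul_of_nonneg_left (hfd _ (hη j)) (pow_nonneg hr0 _)
      _ = (∑ j : Fin ℓ, r ^ (j : ℕ)) * M := by rw [Finset.sum_mul]
      _ ≤ (1 - r)⁻¹ * M := by
          refine mul_le_mul_of_nonneg_right ?_ hM0
          rw [Fin.sum_univ_eq_sum_range]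
          refine Summable.sum_le_tsum (L := SummationFilter.unconditional ℕ) (Finset.range ℓ) (fun i _ => pow_nonneg hr0 i) ?_ |>.trans ?_
          · exact summable_geometric_of_lt_one hr0 hμ1
          · rw [tsum_geometric_of_lt_one hr0 hμ1]
      _ = B := by rw [hB]; ring
  -- pick a coordinate where v is nonzero and a large lattice vector
  obtain ⟨i0, hi0⟩ : ∃ i, v i ≠ 0 := Function.ne_iff.1 hv0
  have hvi0 : 0 < ‖v i0‖ := by
    simpa [norm_pos_iff] using hi0
  set k : ℕ := ⌈B / ‖v i0‖⌉₊ + 1 with hk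
  refine ⟨(k : ℤ) • b i0, ?_, ?_⟩
  · rw [hΛ]
    exact Submodule.smul_mem _ _ (Submodule.subset_span ⟨i0, rfl⟩)
  · intro ℓ η hη heq
    have h1 : ‖f ((k : ℤ) • b i0)‖ = k * ‖v i0‖ := by
      rw [map_zsmul]
      simp [hf, auxF_basis, abs_of_nonneg]
    have h2 : B < k * ‖v i0‖ := by
      have : B / ‖v i0‖ < k := by
        calc B / ‖v i0‖ ≤ ⌈B / ‖v i0‖⌉₊ := Nat.le_ceil _
          _ < k := by rw [hk]; exact_mod_cast Nat.lt_succ_self _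
      calc B = (B / ‖v i0‖) * ‖v i0‖ := by
            field_simp
        _ < k * ‖v i0‖ := by
            exact mul_lt_mul_of_pos_right this hvi0
    have h3 := hbound ℓ η hη
    rw [heq, h1] at h3
    exact absurd h3 (not_le.2 h2)
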